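/- Let S be a uniformly random binary sequence of length n and let s be any fixed binary sequence of length ⌊n/2⌋ - k for some k ≥ 0. Then the probability that s is a subsequence of S is at least 1 - exp(-2k²/n). -/

import Mathlib

open Finset

/-- greedy-matching encoder: records hit/miss bits. -/
def enc : List Bool → List Bool → List Bool
  | _, [] => []
  | [], a :: S => a :: enc [] S
  | c :: s, a :: S => (a == c) :: enc (if a == c then s else c :: s) S

def dec : List Bool → List Bool → List Bool
  | _, [] => []
  | [], b :: T => b :: dec [] T
  | c :: s, b :: T => (if b then c else !c) :: dec (if b then s else c :: s) T

lemma enc_length : ∀ (s S : List Bool), (enc s S).length = S.length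
  | _, [] => by cases ‹List Bool› <;> rfl
  | [], a :: S => by simp [enc, enc_length [] S]
  | c :: s, a :: S => by
      by_cases h : a = c <;> simp [enc, h, enc_length]

lemma dec_enc : ∀ (s S : List Bool), dec s (enc s S) = S
  | _, [] => by cases ‹List Bool› <;> rfl
  | [], a :: S => by simp [enc, dec, dec_enc [] S]
  | c :: s, a :: S => by
      by_cases h : a = c
      · simp [enc, dec, h, dec_enc]
      · have : c = !a := by cases a <;> cases c <;> simp_all
        simp [enc, dec, h, dec_enc, ← this]

lemma enc_dec : ∀ (s T : List Bool), enc s (dec s T) = T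
  | _, [] => by cases ‹List Bool› <;> rfl
  | [], b :: T => by simp [enc, dec, enc_dec [] T]
  | c :: s, b :: T => by
      cases b <;> simp [enc, dec, enc_dec, Bool.eq_not_self]

lemma sublist_iff_count : ∀ (s S : List Bool),
    s.Sublist S ↔ s.length ≤ (enc s S).count true
  | [], S => by cases S <;> simp
  | c :: s, [] => by simp [enc]
  | c :: s, a :: S => by
      by_cases h : a = c
      · subst h
        simp only [enc, beq_self_eq_true, if_true, List.cons_sublist_cons,
          List.count_cons_self, List.length_cons]
        rw [sublist_iff_count s S]
        omega
      · have hne : (a == c) = false := by simp [h]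
        simp only [enc, hne, if_false]
        simp only [if_false, List.count_cons, List.length_cons, show ((false == true) = true) = False from by simp, if_false, add_zero, Bool.false_eq_true]
        rw [show s.length + 1 = (c :: s).length from rfl, ← sublist_iff_count (c :: s) S]
        constructor
        · intro hsub
          cases hsub with
          | cons _ h' => exact h'
          | cons_cons => exact absurd rfl h
        · exact fun h' => h'.cons a

lemma dec_length : ∀ (s T : List Bool), (dec s T).length = T.length
  | _, [] => by cases ‹List Bool› <;> rfl
  | [], b :: T => by simp [dec, dec_length [] T]
  | c :: s, b :: T => by cases b <;> simp [dec, dec_length]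

lemma ofFn_getD {n : ℕ} (l : List Bool) (h : l.length = n) :
    List.ofFn (fun i : Fin n => l.getD i true) = l := by
  subst h
  rw [show (fun i : Fin l.length => l.getD i true) = fun i : Fin l.length => l[(i : ℕ)] from
    funext fun i => List.getD_eq_getElem l true i.isLt]
  exact List.ofFn_getElem

lemma getD_ofFn {n : ℕ} (f : Fin n → Bool) (j : Fin n) :
    (List.ofFn f).getD (j : ℕ) true = f j := by
  rw [List.getD_eq_getElem _ _ (by simpa using j.isLt)]
  simp

lemma card_eq_count {n : ℕ} (s : List Bool) :
    (univ.filter fun S : Fin n → Bool => s.Sublist (List.ofFn S)).card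
      = (univ.filter fun T : Fin n → Bool => s.length ≤ (List.ofFn T).count true).card := by
  apply Finset.card_bij' (fun S _ => fun j : Fin n => (enc s (List.ofFn S)).getD j true)
    (fun T _ => fun j : Fin n => (dec s (List.ofFn T)).getD j true)
  · intro S hS
    simp only [mem_filter, mem_univ, true_and] at hS ⊢
    rw [ofFn_getD (enc s (List.ofFn S)) (by rw [enc_length, List.length_ofFn]),
      ← sublist_iff_count]
    exact hS
  · intro T hT
    simp only [mem_filter, mem_univ, true_and] at hT ⊢
    rw [ofFn_getD (dec s (List.ofFn T)) (by rw [dec_length, List.length_ofFn]),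
      sublist_iff_count, enc_dec]
    exact hT
  · intro S hS
    funext j
    rw [ofFn_getD (enc s (List.ofFn S)) (by rw [enc_length, List.length_ofFn]), dec_enc,
      getD_ofFn]
  · intro T hT
    funext j
    rw [ofFn_getD (dec s (List.ofFn T)) (by rw [dec_length, List.length_ofFn]), enc_dec,
      getD_ofFn]

lemma count_eq_sum : ∀ l : List Bool, l.count true = (l.map fun b => cond b 1 0).sum
  | [] => rfl
  | b :: l => by cases b <;> simp [count_eq_sum l, Nat.add_comm]

lemma count_ofFn {n : ℕ} (T : Fin n → Bool) :
    (List.ofFn T).count true = (univ.filter fun i => T i = true).card := by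
  rw [count_eq_sum, List.map_ofFn, List.sum_ofFn, Finset.card_filter]
  exact Finset.sum_congr rfl fun i _ => by cases h : T i <;> simp [h, Function.comp]

lemma card_finset_card_lt (n m : ℕ) :
    (univ.filter fun A : Finset (Fin n) => A.card < m).card = ∑ j ∈ range m, n.choose j := by
  rw [Finset.card_eq_sum_card_fiberwise (f := Finset.card) (t := range m)
    (fun A hA => by simpa using (mem_filter.mp hA).2)]
  refine Finset.sum_congr rfl fun j hj => ?_
  rw [Finset.filter_filter,
    Finset.filter_congr (fun A (_ : A ∈ univ) =>
      show (A.card < m ∧ A.card = j) ↔ A.card = j from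
        ⟨fun h => h.2, fun h => ⟨h ▸ mem_range.mp hj, h⟩⟩),
    ← Finset.powerset_univ, ← Finset.powersetCard_eq_filter, Finset.card_powersetCard,
    card_univ, Fintype.card_fin]

lemma card_count_lt (n m : ℕ) :
    (univ.filter fun T : Fin n → Bool => (List.ofFn T).count true < m).card
      = ∑ j ∈ range m, n.choose j := by
  rw [← card_finset_card_lt]
  refine Finset.card_bij' (fun T _ => univ.filter fun i => T i = true)
    (fun A _ => fun i => decide (i ∈ A)) ?_ ?_ ?_ ?_
  · intro T hT
    simp only [mem_filter, mem_univ, true_and] at hT ⊢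
    rwa [← count_ofFn]
  · intro A hA
    simp only [mem_filter, mem_univ, true_and] at hA ⊢
    rw [count_ofFn]
    simpa using hA
  · intro T hT
    funext i
    simp
  · intro A hA
    ext i
    simp

lemma chernoff (n m k : ℕ) (hn : 0 < n) (hmk : (m : ℝ) + k ≤ n / 2) :
    (∑ j ∈ range m, (n.choose j : ℝ)) ≤ 2 ^ n * Real.exp (-(2 * (k : ℝ) ^ 2) / n) := by
  have hn' : (0 : ℝ) < n := by exact_mod_cast hn
  obtain ⟨t, ht, htnn⟩ : ∃ t : ℝ, t = 4 * k / n ∧ 0 ≤ t := ⟨_, rfl, by positivity⟩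
  have hmn : m ≤ n := by
    have : (m : ℝ) ≤ n / 2 := by
      have := (Nat.cast_nonneg k : (0 : ℝ) ≤ k); linarith
    have := this.trans (by linarith : (n : ℝ) / 2 ≤ n)
    exact_mod_cast this
  -- step 1-2: insert exponential weights
  have step1 : (∑ j ∈ range m, (n.choose j : ℝ))
      ≤ ∑ j ∈ range (n + 1), (n.choose j : ℝ) * Real.exp (t * (m - j)) := by
    refine le_trans (Finset.sum_le_sum fun j hj => ?_)
      (Finset.sum_le_sum_of_subset_of_nonneg
        (by intro j hj; simp at hj ⊢; omega) (fun j _ _ => by positivity))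
    have hjm : (j : ℝ) ≤ m := by exact_mod_cast (mem_range.mp hj).le
    nth_rewrite 1 [← mul_one ((n.choose j : ℝ))]
    refine mul_le_mul_of_nonneg_left ?_ (by positivity)
    exact Real.one_le_exp (by nlinarith)
  -- step 3: sum equals exp(t m) (1 + e^{-t})^n
  have step3 : ∑ j ∈ range (n + 1), (n.choose j : ℝ) * Real.exp (t * (m - j))
      = Real.exp (t * m) * (Real.exp (-t) + 1) ^ n := by
    rw [(Commute.all (Real.exp (-t)) 1).add_pow, Finset.mul_sum]
    refine Finset.sum_congr rfl fun j hj => ?_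
    rw [one_pow, mul_one, ← Real.exp_nat_mul]
    have h : Real.exp (t * ((m : ℝ) - j)) = Real.exp (t * m) * Real.exp ((j : ℝ) * -t) := by
      rw [← Real.exp_add]; ring_nf
    rw [h]; ring
  -- step 4: hoeffding lemma
  have step4 : (Real.exp (-t) + 1) ^ n ≤ (2 * Real.exp (-t / 2 + t ^ 2 / 8)) ^ n := by
    gcongr
    have e1 : Real.exp (-t) = Real.exp (-t / 2) * Real.exp (-t / 2) := by
      rw [← Real.exp_add]; congr 1; ring
    have e2 : (1 : ℝ) = Real.exp (-t / 2) * Real.exp (t / 2) := by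
      rw [← Real.exp_add, show -t / 2 + t / 2 = 0 from by ring, Real.exp_zero]
    have e3 : Real.exp (-(t / 2)) = Real.exp (-t / 2) := by congr 1; ring
    have hc : Real.exp (-t) + 1 = 2 * Real.exp (-t / 2) * Real.cosh (t / 2) := by
      rw [Real.cosh_eq]
      linear_combination e1 + e2 - Real.exp (-t / 2) * e3
    rw [hc, Real.exp_add, mul_assoc]
    gcongr
    calc Real.cosh (t / 2) ≤ Real.exp ((t / 2) ^ 2 / 2) := Real.cosh_le_exp_half_sq _
      _ = Real.exp (t ^ 2 / 8) := by ring_nf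
  -- combine
  have combine : Real.exp (t * m) * (2 * Real.exp (-t / 2 + t ^ 2 / 8)) ^ n
      = 2 ^ n * Real.exp (t * m + n * (-t / 2 + t ^ 2 / 8)) := by
    rw [mul_pow, ← Real.exp_nat_mul]
    have h : Real.exp (t * (m : ℝ)) * Real.exp ((n : ℝ) * (-t / 2 + t ^ 2 / 8))
        = Real.exp (t * m + n * (-t / 2 + t ^ 2 / 8)) := by rw [← Real.exp_add]
    rw [← h]; ring
  have hexp : t * m + n * (-t / 2 + t ^ 2 / 8) ≤ -(2 * (k : ℝ) ^ 2) / n := by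
    rw [ht]
    have hk : (0 : ℝ) ≤ k := Nat.cast_nonneg k
    have hm : (0 : ℝ) ≤ m := Nat.cast_nonneg m
    have key : ((4 * (k : ℝ) / n) * m + n * (-(4 * (k : ℝ) / n) / 2 + (4 * (k : ℝ) / n) ^ 2 / 8)) * n
        ≤ (-(2 * (k : ℝ) ^ 2) / n) * n := by
      have e1 : ((4 * (k : ℝ) / n) * m + n * (-(4 * (k : ℝ) / n) / 2 + (4 * (k : ℝ) / n) ^ 2 / 8)) * n
          = 4 * k * m - 2 * k * n + 2 * (k : ℝ) ^ 2 := by field_simp; ring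
      have e2 : (-(2 * (k : ℝ) ^ 2) / n) * n = -(2 * (k : ℝ) ^ 2) := by field_simp
      rw [e1, e2]
      nlinarith [hmk, hk, hm]
    exact le_of_mul_le_mul_right key hn'
  calc (∑ j ∈ range m, (n.choose j : ℝ))
      ≤ Real.exp (t * m) * (Real.exp (-t) + 1) ^ n := by rw [← step3]; exact step1
    _ ≤ Real.exp (t * m) * (2 * Real.exp (-t / 2 + t ^ 2 / 8)) ^ n := by
        exact mul_le_mul_of_nonneg_left step4 (by positivity)
    _ = 2 ^ n * Real.exp (t * m + n * (-t / 2 + t ^ 2 / 8)) := combine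
    _ ≤ 2 ^ n * Real.exp (-(2 * (k : ℝ) ^ 2) / n) :=
        mul_le_mul_of_nonneg_left (Real.exp_le_exp.mpr hexp) (by positivity)

/-- Let `S` be a uniformly random binary sequence of length `n ≥ 1` and `s` a fixed binary
sequence of length `⌊n/2⌋ - k` for some `k ≥ 0`. Then the probability that `s` is a
subsequence of `S` is at least `1 - exp(-2k²/n)`. -/
theorem stmt6 (n k : ℕ) (hn : 0 < n) (s : List Bool) (hs : s.length = n / 2 - k) :
    ((univ.filter fun S : Fin n → Bool => s.Sublist (List.ofFn S)).card : ℝ) / 2 ^ n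
      ≥ 1 - Real.exp (-(2 * (k : ℝ) ^ 2) / n) := by
  have h2n : (0 : ℝ) < 2 ^ n := by positivity
  by_cases hk : k ≤ n / 2
  case neg =>
    -- then s = [] and the probability is 1
    have hs0 : s = [] := List.length_eq_zero_iff.mp (by omega)
    subst hs0
    have : (univ.filter fun S : Fin n → Bool => List.Sublist [] (List.ofFn S)) = univ := by
      refine Finset.filter_true_of_mem fun S _ => List.nil_sublist _
    rw [this, card_univ]
    have : (Fintype.card (Fin n → Bool) : ℝ) = 2 ^ n := by
      simp [Fintype.card_fun]
    rw [this, div_self (ne_of_gt h2n)]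
    have := Real.exp_pos (-(2 * (k : ℝ) ^ 2) / n)
    linarith
  case pos =>
    have hmk : (s.length : ℝ) + k ≤ (n : ℝ) / 2 := by
      have h1 : s.length + k = n / 2 := by omega
      have h2 : ((n / 2 : ℕ) : ℝ) ≤ (n : ℝ) / 2 := by
        have := Nat.div_mul_le_self n 2
        have h3 : ((n / 2 : ℕ) : ℝ) * 2 ≤ n := by exact_mod_cast this
        linarith
      calc (s.length : ℝ) + k = ((s.length + k : ℕ) : ℝ) := by push_cast; ring
        _ = ((n / 2 : ℕ) : ℝ) := by rw [h1]
        _ ≤ (n : ℝ) / 2 := h2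
    have hch := chernoff n s.length k hn hmk
    -- complement counting
    have hsplit : (univ.filter fun T : Fin n → Bool =>
          s.length ≤ (List.ofFn T).count true).card
        + (univ.filter fun T : Fin n → Bool => (List.ofFn T).count true < s.length).card
        = 2 ^ n := by
      have heq : (univ.filter fun T : Fin n → Bool => (List.ofFn T).count true < s.length)
          = univ.filter fun T => ¬ (s.length ≤ (List.ofFn T).count true) :=
        Finset.filter_congr fun T _ => by simp [Nat.not_le]
      rw [heq, Finset.card_filter_add_card_filter_not, card_univ]
      simp [Fintype.card_fun]
    rw [card_eq_count]
    have hcount : ((univ.filter fun T : Fin n → Bool =>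
        s.length ≤ (List.ofFn T).count true).card : ℝ)
        = 2 ^ n - ∑ j ∈ range s.length, (n.choose j : ℝ) := by
      have := hsplit
      rw [card_count_lt] at this
      have : ((univ.filter fun T : Fin n → Bool =>
          s.length ≤ (List.ofFn T).count true).card : ℝ)
          + ∑ j ∈ range s.length, (n.choose j : ℝ) = 2 ^ n := by
        exact_mod_cast congrArg (Nat.cast (R := ℝ)) this
      linarith
    rw [hcount, ge_iff_le, le_div_iff₀ h2n]
    nlinarith [hch, Real.exp_pos (-(2 * (k : ℝ) ^ 2) / n)]
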